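/- Let $\alpha \in (0,1)$, $T > 0$, $\delta \ge 1$, $C_0 > 0$, and consider the graded mesh. Let $u : [0,T] \to \mathbb{R}$ be continuous on $[0,T]$ and twice continuously differentiable on $(0,T]$ with $|u''(t)| \le C_0\, t^{\alpha-2}$ for all $t \in (0,T]$. Then there exists a constant $C > 0$, depending only on $C_0$, $\alpha$, $\delta$ and $T$, such that for every $N \ge 2$ and every integer $n$ with $2 \le n \le N$, the linearization error satisfies $\Big| u(t_n) - \Big( \big(1 + \tfrac{\tau_n}{\tau_{n-1}}\big) u(t_{n-1}) - \tfrac{\tau_n}{\tau_{n-1}}\, u(t_{n-2}) \Big) \Big| \le C\, N^{-\min\{\delta\alpha,\,2\}}$. -/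

import Mathlib

open Real Set

lemma mvt_pair {u u' u'' : ℝ → ℝ} {T a b M : ℝ} (ha : 0 < a) (hab : a ≤ b) (hbT : b ≤ T)
    (hu : ∀ s ∈ Set.Ioc (0:ℝ) T, HasDerivAt u (u' s) s)
    (hu' : ∀ s ∈ Set.Ioc (0:ℝ) T, HasDerivAt u' (u'' s) s)
    (hM : ∀ s ∈ Set.Icc a b, |u'' s| ≤ M) :
    |u b - u a - (b - a) * u' a| ≤ M * (b - a) ^ 2 ∧
      |u a - u b + (b - a) * u' b| ≤ M * (b - a) ^ 2 := by
  have hsub : Set.Icc a b ⊆ Set.Ioc 0 T := fun x hx => ⟨lt_of_lt_of_le ha hx.1, le_trans hx.2 hbT⟩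
  have hconv : Convex ℝ (Set.Icc a b) := convex_Icc a b
  have hM0 : 0 ≤ M := le_trans (abs_nonneg _) (hM a ⟨le_refl a, hab⟩)
  have step1 : ∀ c ∈ Set.Icc a b, ∀ x ∈ Set.Icc a b, |u' x - u' c| ≤ M * (b - a) := by
    intro c hc x hx
    have h := hconv.norm_image_sub_le_of_norm_hasDerivWithin_le
      (fun y hy => (hu' y (hsub hy)).hasDerivWithinAt)
      (fun y hy => hM y hy) hc hx
    calc |u' x - u' c| ≤ M * |x - c| := h
    _ ≤ M * (b - a) := by
        have : |x - c| ≤ b - a := by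
          rw [abs_sub_le_iff]; constructor <;> linarith [hx.1, hx.2, hc.1, hc.2]
        exact mul_le_mul_of_nonneg_left this hM0
  have step2 : ∀ c ∈ Set.Icc a b, |u b - u a - (b - a) * u' c| ≤ M * (b - a) ^ 2 := by
    intro c hc
    have hder : ∀ x ∈ Set.Icc a b,
        HasDerivWithinAt (fun x => u x - x * u' c) (u' x - u' c) (Set.Icc a b) x := by
      intro x hx
      have : HasDerivAt (fun x => u x - x * u' c) (u' x - 1 * u' c) x :=
        (hu x (hsub hx)).sub ((hasDerivAt_id x).mul_const (u' c))
      simpa using this.hasDerivWithinAt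
    have h := hconv.norm_image_sub_le_of_norm_hasDerivWithin_le hder
      (fun x hx => step1 c hc x hx) ⟨le_refl a, hab⟩ ⟨hab, le_refl b⟩
    have hba : |b - a| = b - a := abs_of_nonneg (by linarith)
    rw [Real.norm_eq_abs, Real.norm_eq_abs, hba] at h
    calc |u b - u a - (b - a) * u' c| = |u b - b * u' c - (u a - a * u' c)| := by ring_nf
    _ ≤ M * (b - a) * (b - a) := h
    _ = M * (b - a) ^ 2 := by ring
  refine ⟨step2 a ⟨le_refl a, hab⟩, ?_⟩
  have h := step2 b ⟨hab, le_refl b⟩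
  calc |u a - u b + (b - a) * u' b| = |u b - u a - (b - a) * u' b| := by rw [abs_sub_comm (u b - u a) _]; ring_nf
  _ ≤ M * (b - a) ^ 2 := h

-- monotonicity helper: f has nonneg derivative f' on Ioo of an interval, continuous on interval
lemma rpow_sub_le {a b δ : ℝ} (ha : 0 ≤ a) (hab : a ≤ b) (hδ : 1 ≤ δ) :
    b ^ δ - a ^ δ ≤ δ * b ^ (δ - 1) * (b - a) := by
  have hb : 0 ≤ b := le_trans ha hab
  have hder : ∀ x ∈ Set.Icc a b,
      HasDerivWithinAt (fun x : ℝ => x ^ δ) (δ * x ^ (δ - 1)) (Set.Icc a b) x := fun x hx =>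
    (Real.hasDerivAt_rpow_const (Or.inr hδ)).hasDerivWithinAt
  have hbound : ∀ x ∈ Set.Icc a b, ‖δ * x ^ (δ - 1)‖ ≤ δ * b ^ (δ - 1) := by
    intro x hx
    have hx0 : 0 ≤ x := le_trans ha hx.1
    rw [Real.norm_eq_abs, abs_of_nonneg (by positivity)]
    have : x ^ (δ - 1) ≤ b ^ (δ - 1) :=
      Real.rpow_le_rpow hx0 hx.2 (by linarith)
    nlinarith [Real.rpow_nonneg hx0 (δ - 1)]
  have h := (convex_Icc a b).norm_image_sub_le_of_norm_hasDerivWithin_le hder hbound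
    ⟨le_refl a, hab⟩ ⟨hab, le_refl b⟩
  rw [Real.norm_eq_abs, Real.norm_eq_abs, abs_of_nonneg (by linarith : (0:ℝ) ≤ b - a)] at h
  exact le_trans (le_abs_self _) h

lemma near_zero {u u' u'' : ℝ → ℝ} {T b C₀ α : ℝ} (hb : 0 < b) (hbT : b ≤ T)
    (hα : α ∈ Set.Ioo (0:ℝ) 1) (hC₀ : 0 < C₀)
    (hc : ContinuousOn u (Set.Icc 0 T))
    (hu : ∀ s ∈ Set.Ioc (0:ℝ) T, HasDerivAt u (u' s) s)
    (hu' : ∀ s ∈ Set.Ioc (0:ℝ) T, HasDerivAt u' (u'' s) s)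
    (hbd : ∀ s ∈ Set.Ioc (0:ℝ) T, |u'' s| ≤ C₀ * s ^ (α - 2)) :
    |u 0 - u b + b * u' b| ≤ (C₀ / ((1 - α) * α)) * b ^ α := by
  obtain ⟨hα0, hα1⟩ := hα
  set c : ℝ := C₀ / (1 - α) with hc_def
  have hc0 : 0 < c := div_pos hC₀ (by linarith)
  have hsub : Set.Ioc 0 b ⊆ Set.Ioc (0:ℝ) T := fun x hx => ⟨hx.1, le_trans hx.2 hbT⟩
  -- Step 1 : |u' s - u' b| ≤ c * s ^ (α - 1) for s ∈ Ioc 0 b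
  have hcontu' : ContinuousOn u' (Set.Ioc 0 b) := fun x hx =>
    ((hu' x (hsub hx)).continuousAt).continuousWithinAt
  have hcontpow : ∀ p : ℝ, ContinuousOn (fun x : ℝ => x ^ p) (Set.Ioc 0 b) := by
    intro p x hx
    exact (Real.continuousAt_rpow_const x p (Or.inl (ne_of_gt hx.1))).continuousWithinAt
  have hderpow : ∀ p : ℝ, ∀ x ∈ Set.Ioo (0:ℝ) b, HasDerivAt (fun x : ℝ => x ^ p) (p * x ^ (p-1)) x :=
    fun p x hx => Real.hasDerivAt_rpow_const (Or.inl (ne_of_gt hx.1))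
  have step1 : ∀ s ∈ Set.Ioc (0:ℝ) b, |u' s - u' b| ≤ c * s ^ (α - 1) := by
    intro s hs
    have hbp : (0:ℝ) ≤ c * b ^ (α - 1) := by positivity
    have key : ∀ (ε : ℝ), ε = 1 ∨ ε = -1 →
        ∀ x ∈ Set.Ioc (0:ℝ) b, ∀ y ∈ Set.Ioc (0:ℝ) b, x ≤ y →
        (fun z => ε * u' z + c * z ^ (α - 1)) y ≤ (fun z => ε * u' z + c * z ^ (α - 1)) x := by
      intro ε hε
      have : AntitoneOn (fun z => ε * u' z + c * z ^ (α - 1)) (Set.Ioc 0 b) := by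
        apply antitoneOn_of_deriv_nonpos (convex_Ioc 0 b)
        · exact (hcontu'.const_smul ε).add ((hcontpow (α-1)).const_smul c)
        · intro x hx
          rw [interior_Ioc] at hx
          exact (((hu' x (hsub ⟨hx.1, hx.2.le⟩)).const_mul ε).add
            ((hderpow (α-1) x hx).const_mul c)).differentiableAt.differentiableWithinAt
        · intro x hx
          rw [interior_Ioc] at hx
          have hd : HasDerivAt (fun z => ε * u' z + c * z ^ (α - 1))
              (ε * u'' x + c * ((α-1) * x ^ (α-1-1))) x :=
            ((hu' x (hsub ⟨hx.1, hx.2.le⟩)).const_mul ε).add ((hderpow (α-1) x hx).const_mul c)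
          rw [hd.deriv]
          have hne : (1:ℝ) - α ≠ 0 := by linarith
          have hcm0 : c * (1 - α) = C₀ := div_mul_cancel₀ C₀ hne
          have hcm : c * (α - 1) = -C₀ := by
            have h5 : c * (α - 1) = -(c * (1 - α)) := by ring
            rw [h5, hcm0]
          have h2 : c * ((α-1) * x ^ (α-1-1)) = -(C₀ * x ^ (α-2)) := by
            have he : α - 1 - 1 = α - 2 := by ring
            rw [he, ← mul_assoc, hcm]
            ring
          rw [h2]
          have := hbd x (hsub ⟨hx.1, hx.2.le⟩)
          have hε2 : ε * u'' x ≤ |u'' x| := by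
            rcases hε with h | h
            · rw [h, one_mul]; exact le_abs_self _
            · rw [h, neg_one_mul]; exact neg_le_abs _
          linarith
      intro x hx y hy hxy
      exact this hx hy hxy
    have h1 := key 1 (Or.inl rfl) s hs b ⟨hb, le_refl b⟩ hs.2
    have h2 := key (-1) (Or.inr rfl) s hs b ⟨hb, le_refl b⟩ hs.2
    simp only [one_mul, neg_mul, neg_one_mul] at h1 h2
    rw [abs_sub_le_iff]
    have hbpow : 0 ≤ c * b ^ (α - 1) := by positivity
    constructor <;> nlinarith
  -- Step 2
  have hsub2 : Set.Icc (0:ℝ) b ⊆ Set.Icc 0 T := Set.Icc_subset_Icc le_rfl hbT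
  have hcontpow0 : ContinuousOn (fun x : ℝ => x ^ α) (Set.Icc 0 b) := fun x hx =>
    (Real.continuousAt_rpow_const x α (Or.inr hα0.le)).continuousWithinAt
  have key2 : ∀ (ε : ℝ), ε = 1 ∨ ε = -1 →
      (fun z => ε * (u z - z * u' b) + (c/α) * z ^ α) 0 ≤
      (fun z => ε * (u z - z * u' b) + (c/α) * z ^ α) b := by
    intro ε hε
    have hmono : MonotoneOn (fun z => ε * (u z - z * u' b) + (c/α) * z ^ α) (Set.Icc 0 b) := by
      apply monotoneOn_of_deriv_nonneg (convex_Icc 0 b)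
      · exact (((hc.mono hsub2).sub ((continuous_id.mul continuous_const).continuousOn)).const_smul ε).add
          (hcontpow0.const_smul (c/α))
      · intro x hx
        rw [interior_Icc] at hx
        exact (((hu x ⟨hx.1, hx.2.le.trans hbT⟩).sub
          ((hasDerivAt_id x).mul_const (u' b))).const_mul ε).add
          ((hderpow α x hx).const_mul (c/α)) |>.differentiableAt.differentiableWithinAt
      · intro x hx
        rw [interior_Icc] at hx
        have hd : HasDerivAt (fun z => ε * (u z - z * u' b) + (c/α) * z ^ α)
            (ε * (u' x - 1 * u' b) + (c/α) * (α * x ^ (α-1))) x :=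
          (((hu x ⟨hx.1, hx.2.le.trans hbT⟩).sub
            ((hasDerivAt_id x).mul_const (u' b))).const_mul ε).add
            ((hderpow α x hx).const_mul (c/α))
        rw [hd.deriv]
        have hαne : α ≠ 0 := ne_of_gt hα0
        have h3 : (c/α) * (α * x ^ (α-1)) = c * x ^ (α-1) := by
          rw [← mul_assoc, div_mul_cancel₀ c hαne]
        have h4 := step1 x ⟨hx.1, hx.2.le⟩
        have hε2 : -|u' x - u' b| ≤ ε * (u' x - 1 * u' b) := by
          rcases hε with h | h
          · rw [h, one_mul, one_mul]; exact neg_abs_le _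
          · rw [h, one_mul, neg_one_mul]; exact neg_le_neg (le_abs_self _)
        rw [h3]
        linarith
    exact hmono ⟨le_refl 0, hb.le⟩ ⟨hb.le, le_refl b⟩ hb.le
  have h1 := key2 1 (Or.inl rfl)
  have h2 := key2 (-1) (Or.inr rfl)
  have h0 : (0:ℝ) ^ α = 0 := Real.zero_rpow (ne_of_gt hα0)
  simp only [one_mul, neg_mul, neg_one_mul, h0, mul_zero, zero_mul, add_zero, sub_zero] at h1 h2
  have hca : c / α = C₀ / ((1 - α) * α) := by rw [hc_def]; rw [div_div]
  rw [← hca, abs_le]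
  constructor
  · linarith
  · linarith

lemma exp_key {p : ℝ} (hp : 0 < p) {n N : ℝ} (hn : 1 ≤ n) (hnN : n ≤ N) :
    n ^ (p - 2) * N ^ (-p) ≤ N ^ (-(min p 2)) := by
  have hN1 : (1:ℝ) ≤ N := le_trans hn hnN
  have hN0 : (0:ℝ) < N := lt_of_lt_of_le one_pos hN1
  rcases le_total p 2 with h | h
  · rw [min_eq_left h]
    have h1 : n ^ (p - 2) ≤ 1 := Real.rpow_le_one_of_one_le_of_nonpos hn (by linarith)
    calc n ^ (p-2) * N ^ (-p) ≤ 1 * N ^ (-p) :=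
        mul_le_mul_of_nonneg_right h1 (Real.rpow_nonneg hN0.le _)
    _ = N ^ (-p) := one_mul _
  · rw [min_eq_right h]
    have h1 : n ^ (p - 2) ≤ N ^ (p - 2) := Real.rpow_le_rpow (by linarith) hnN (by linarith)
    calc n ^ (p-2) * N ^ (-p) ≤ N ^ (p-2) * N ^ (-p) :=
        mul_le_mul_of_nonneg_right h1 (Real.rpow_nonneg hN0.le _)
    _ = N ^ (-(2:ℝ)) := by rw [← Real.rpow_add hN0]; congr 1; ring

lemma piece {δ α N j k n : ℝ} (hδ : 1 ≤ δ) (hα0 : 0 < α) (hα1 : α < 1)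
    (hj : 0 < j) (h3j : n ≤ 3 * j) (hk : 0 < k) (hkn : k ≤ n)
    (hn : 1 ≤ n) (hnN : n ≤ N) :
    (j/N) ^ (δ*(α-2)) * (k/N) ^ (δ-1) * ((n/N) ^ (δ-1) * (1/N * (1/N)))
      ≤ 9 ^ δ * N ^ (-(min (δ*α) 2)) := by
  have hN1 : (1:ℝ) ≤ N := le_trans hn hnN
  have hN0 : (0:ℝ) < N := lt_of_lt_of_le one_pos hN1
  have hn0 : (0:ℝ) < n := lt_of_lt_of_le one_pos hn
  have hδ0 : (0:ℝ) < δ := lt_of_lt_of_le one_pos hδ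
  set q : ℝ := n / N with hqdef
  have hq0 : 0 < q := div_pos hn0 hN0
  have he : δ * (α - 2) ≤ 0 := by nlinarith
  have hA : (j/N) ^ (δ*(α-2)) ≤ 9 ^ δ * q ^ (δ*(α-2)) := by
    have hq3 : q / 3 ≤ j / N := by
      have hq3' : q / 3 = (n/3) / N := by rw [hqdef]; ring
      rw [hq3']
      gcongr
      linarith
    have h1 : (j/N) ^ (δ*(α-2)) ≤ (q/3) ^ (δ*(α-2)) :=
      Real.rpow_le_rpow_of_nonpos (by positivity) hq3 he
    have h2 : (q/3) ^ (δ*(α-2)) = q ^ (δ*(α-2)) * (3:ℝ) ^ (-(δ*(α-2))) := by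
      rw [Real.div_rpow hq0.le (by norm_num : (0:ℝ) ≤ 3),
        Real.rpow_neg (by norm_num : (0:ℝ) ≤ 3), div_eq_mul_inv]
    have h3 : (3:ℝ) ^ (-(δ*(α-2))) ≤ 9 ^ δ := by
      have e1 : (3:ℝ) ^ (-(δ*(α-2))) ≤ (3:ℝ) ^ (2*δ) :=
        Real.rpow_le_rpow_of_exponent_le (by norm_num) (by nlinarith)
      have e2 : (3:ℝ) ^ (2*δ) = 9 ^ δ := by
        have h32 : (3:ℝ) ^ (2:ℝ) = 9 := by
          rw [show (2:ℝ) = ((2:ℕ):ℝ) by norm_num, Real.rpow_natCast]; norm_num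
        rw [Real.rpow_mul (by norm_num : (0:ℝ) ≤ 3), h32]
      rw [← e2]; exact e1
    calc (j/N) ^ (δ*(α-2)) ≤ q ^ (δ*(α-2)) * (3:ℝ) ^ (-(δ*(α-2))) := h2 ▸ h1
    _ ≤ q ^ (δ*(α-2)) * 9 ^ δ :=
        mul_le_mul_of_nonneg_left h3 (Real.rpow_nonneg hq0.le _)
    _ = 9 ^ δ * q ^ (δ*(α-2)) := mul_comm _ _
  have hB : (k/N) ^ (δ-1) ≤ q ^ (δ-1) := by
    apply Real.rpow_le_rpow (by positivity) _ (by linarith)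
    rw [hqdef]
    gcongr
  have hq2 : q ^ (δ*(α-2)) * q ^ (δ-1) * q ^ (δ-1) = q ^ (δ*α - 2) := by
    rw [← Real.rpow_add hq0, ← Real.rpow_add hq0]
    congr 1; ring
  have hNN : (1/N) * (1/N) = N ^ (-(2:ℝ)) := by
    have h1N : (1:ℝ)/N = N ^ (-(1:ℝ)) := by rw [Real.rpow_neg_one, one_div]
    rw [h1N, ← Real.rpow_add hN0]; norm_num
  have hqn : q ^ (δ*α - 2) = n ^ (δ*α - 2) * N ^ (-(δ*α - 2)) := by
    rw [hqdef, Real.div_rpow hn0.le hN0.le, Real.rpow_neg hN0.le, div_eq_mul_inv]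
  have hcomb : N ^ (-(δ*α - 2)) * N ^ (-(2:ℝ)) = N ^ (-(δ*α)) := by
    rw [← Real.rpow_add hN0]; congr 1; ring
  calc (j/N) ^ (δ*(α-2)) * (k/N) ^ (δ-1) * ((n/N) ^ (δ-1) * (1/N * (1/N)))
      ≤ (9 ^ δ * q ^ (δ*(α-2))) * (q ^ (δ-1)) * (q ^ (δ-1) * (1/N * (1/N))) := by
        have g1 : (0:ℝ) ≤ (1/N * (1/N)) := by positivity
        gcongr <;> positivity
    _ = 9 ^ δ * ((q ^ (δ*(α-2)) * q ^ (δ-1) * q ^ (δ-1)) * ((1/N) * (1/N))) := by ring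
    _ = 9 ^ δ * (n ^ (δ*α - 2) * (N ^ (-(δ*α - 2)) * N ^ (-(2:ℝ)))) := by
        rw [hq2, hNN, hqn]; ring
    _ = 9 ^ δ * (n ^ (δ*α - 2) * N ^ (-(δ*α))) := by rw [hcomb]
    _ ≤ 9 ^ δ * N ^ (-(min (δ*α) 2)) := by
        have := exp_key (p := δ*α) (by nlinarith) hn hnN
        exact mul_le_mul_of_nonneg_left this (Real.rpow_nonneg (by norm_num) _)
set_option maxHeartbeats 2000000 in
theorem graded_mesh_linearization_error
    (α T δ C₀ : ℝ) (hα : α ∈ Set.Ioo (0 : ℝ) 1) (hT : 0 < T) (hδ : 1 ≤ δ)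
    (hC₀ : 0 < C₀) :
    ∃ C : ℝ, 0 < C ∧
      ∀ (N : ℕ), 2 ≤ N →
        ∀ (t τ : ℕ → ℝ), (∀ m, t m = T * ((m : ℝ) / (N : ℝ)) ^ δ) →
          (∀ m, 1 ≤ m → τ m = t m - t (m - 1)) →
          ∀ (u u' u'' : ℝ → ℝ),
            ContinuousOn u (Set.Icc 0 T) →
            (∀ s ∈ Set.Ioc (0 : ℝ) T, HasDerivAt u (u' s) s) →
            (∀ s ∈ Set.Ioc (0 : ℝ) T, HasDerivAt u' (u'' s) s) →
            ContinuousOn u'' (Set.Ioc 0 T) →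
            (∀ s ∈ Set.Ioc (0 : ℝ) T, |u'' s| ≤ C₀ * s ^ (α - 2)) →
            ∀ n, 2 ≤ n → n ≤ N →
              |u (t n) - ((1 + τ n / τ (n - 1)) * u (t (n - 1)) -
                  (τ n / τ (n - 1)) * u (t (n - 2)))| ≤
                C * (N : ℝ) ^ (-(min (δ * α) 2)) := by
  obtain ⟨hα0, hα1⟩ := hα
  have hδ0 : (0:ℝ) < δ := lt_of_lt_of_le one_pos hδ
  have h1α : (0:ℝ) < 1 - α := by linarith
  set c' : ℝ := C₀ / ((1 - α) * α) with hc'def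
  have hc'0 : 0 < c' := div_pos hC₀ (by positivity)
  have hC₀c' : C₀ ≤ c' := by
    rw [hc'def, le_div_iff₀ (by positivity)]
    nlinarith [mul_nonneg hC₀.le (sq_nonneg (2*α - 1))]
  have hTα : (0:ℝ) < T ^ α := Real.rpow_pos_of_pos hT α
  have h9δ : (0:ℝ) < (9:ℝ) ^ δ := Real.rpow_pos_of_pos (by norm_num) δ
  refine ⟨2 * (c' * T ^ α * δ ^ 2 * 9 ^ δ), by positivity, ?_⟩
  set K : ℝ := c' * T ^ α * δ ^ 2 * 9 ^ δ with hKdef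
  have hK0 : 0 < K := by positivity
  intro N hN2 t τ ht hτ u u' u'' hcont hu hu' _ hbd n hn2 hnN
  have hN0 : (0:ℝ) < (N:ℝ) := by
    have : (0:ℕ) < N := by omega
    exact_mod_cast this
  have hN1 : (1:ℝ) ≤ (N:ℝ) := by
    have : (1:ℕ) ≤ N := by omega
    exact_mod_cast this
  set X : ℝ := (N:ℝ) ^ (-(min (δ*α) 2)) with hXdef
  have hX0 : 0 ≤ X := Real.rpow_nonneg hN0.le _
  -- basic mesh facts
  have ht0 : t 0 = 0 := by
    rw [ht 0]
    simp [Real.zero_rpow (ne_of_gt hδ0)]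
  have htpos : ∀ m : ℕ, 1 ≤ m → 0 < t m := by
    intro m hm
    rw [ht m]
    have h1 : (0:ℝ) < (m:ℝ)/N := by
      apply div_pos _ hN0
      exact_mod_cast hm
    positivity
  have htmono : ∀ m k : ℕ, m < k → t m < t k := by
    intro m k hmk
    rw [ht m, ht k]
    apply mul_lt_mul_of_pos_left _ hT
    apply Real.rpow_lt_rpow (by positivity) _ hδ0
    gcongr
  have htleT : ∀ m : ℕ, m ≤ N → t m ≤ T := by
    intro m hm
    rw [ht m]
    calc T * ((m:ℝ)/N)^δ ≤ T * 1 := by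
          apply mul_le_mul_of_nonneg_left _ hT.le
          apply Real.rpow_le_one (by positivity) _ hδ0.le
          rw [div_le_one hN0]
          exact_mod_cast hm
    _ = T := mul_one T
  have hτub : ∀ m : ℕ, 1 ≤ m → τ m ≤ T * δ * ((m:ℝ)/N)^(δ-1) * (1/N) := by
    intro m hm
    have hcast : ((m-1:ℕ):ℝ) = (m:ℝ) - 1 := by
      rw [Nat.cast_sub hm, Nat.cast_one]
    have hle : ((m-1:ℕ):ℝ)/N ≤ (m:ℝ)/N := by
      gcongr
      exact_mod_cast Nat.sub_le m 1
    have hdiff : (m:ℝ)/N - ((m-1:ℕ):ℝ)/N = 1/N := by rw [hcast]; ring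
    rw [hτ m hm, ht m, ht (m-1)]
    calc T * ((m:ℝ)/N)^δ - T * (((m-1:ℕ):ℝ)/N)^δ
        = T * (((m:ℝ)/N)^δ - (((m-1:ℕ):ℝ)/N)^δ) := by ring
    _ ≤ T * (δ * ((m:ℝ)/N)^(δ-1) * ((m:ℝ)/N - ((m-1:ℕ):ℝ)/N)) :=
        mul_le_mul_of_nonneg_left (rpow_sub_le (by positivity) hle hδ) hT.le
    _ = T * δ * ((m:ℝ)/N)^(δ-1) * (1/N) := by rw [hdiff]; ring
  have hτpos : ∀ m : ℕ, 1 ≤ m → 0 < τ m := by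
    intro m hm
    rw [hτ m hm]
    have := htmono (m-1) m (by omega)
    linarith
  have htpow : ∀ m : ℕ, 1 ≤ m → (t m) ^ (α-2) = T^(α-2) * ((m:ℝ)/N)^(δ*(α-2)) := by
    intro m hm
    have hq : (0:ℝ) < (m:ℝ)/N := by
      apply div_pos _ hN0
      exact_mod_cast hm
    rw [ht m, Real.mul_rpow hT.le (Real.rpow_nonneg hq.le δ), ← Real.rpow_mul hq.le]
  -- indices
  have h1n1 : 1 ≤ n - 1 := by omega
  have htn1 : 0 < t (n-1) := htpos _ h1n1
  have htnn : t (n-1) < t n := htmono _ _ (by omega)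
  have htnT : t n ≤ T := htleT n hnN
  have htn1T : t (n-1) ≤ T := htleT (n-1) (by omega)
  have hτn : τ n = t n - t (n-1) := hτ n (by omega)
  have hτn1 : τ (n-1) = t (n-1) - t (n-2) := by
    have e : n - 1 - 1 = n - 2 := by omega
    rw [hτ (n-1) h1n1, e]
  have hτnpos : 0 < τ n := hτpos n (by omega)
  have hτn1pos : 0 < τ (n-1) := hτpos (n-1) h1n1
  have hTcol : T^(α-2) * T^(2:ℕ) = T^α := by
    rw [← Real.rpow_natCast T 2, ← Real.rpow_add hT]
    norm_num
  have hncast1 : (1:ℝ) ≤ (n:ℝ) := by exact_mod_cast (by omega : 1 ≤ n)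
  have h2ncast : (2:ℝ) ≤ (n:ℝ) := by exact_mod_cast hn2
  have hnNcast : (n:ℝ) ≤ (N:ℝ) := by exact_mod_cast hnN
  have hn1cast : ((n-1:ℕ):ℝ) = (n:ℝ) - 1 := by
    rw [Nat.cast_sub (by omega), Nat.cast_one]
  -- R1 bound
  have hM1 : ∀ s ∈ Set.Icc (t (n-1)) (t n), |u'' s| ≤ C₀ * (t (n-1))^(α-2) := by
    intro s hs
    have hs' : s ∈ Set.Ioc (0:ℝ) T := ⟨lt_of_lt_of_le htn1 hs.1, le_trans hs.2 htnT⟩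
    refine le_trans (hbd s hs') ?_
    exact mul_le_mul_of_nonneg_left
      (Real.rpow_le_rpow_of_nonpos htn1 hs.1 (by linarith)) hC₀.le
  have hR1 : |u (t n) - u (t (n-1)) - τ n * u' (t (n-1))| ≤
      (C₀ * (t (n-1))^(α-2)) * (τ n)^2 := by
    have := (mvt_pair htn1 htnn.le htnT hu hu' hM1).1
    rw [hτn]
    exact this
  -- decomposition
  have hiden : u (t n) - ((1 + τ n / τ (n-1)) * u (t (n-1)) - (τ n / τ (n-1)) * u (t (n-2)))
      = (u (t n) - u (t (n-1)) - τ n * u' (t (n-1)))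
        + (τ n / τ (n-1)) * (u (t (n-2)) - u (t (n-1)) + τ (n-1) * u' (t (n-1))) := by
    field_simp
    ring
  have habs : |u (t n) - ((1 + τ n / τ (n-1)) * u (t (n-1)) - (τ n / τ (n-1)) * u (t (n-2)))|
      ≤ (C₀ * (t (n-1))^(α-2)) * (τ n)^2
        + (τ n / τ (n-1)) * |u (t (n-2)) - u (t (n-1)) + τ (n-1) * u' (t (n-1))| := by
    rw [hiden]
    refine le_trans (abs_add_le _ _) ?_
    rw [abs_mul, abs_of_pos (div_pos hτnpos hτn1pos)]
    exact add_le_add_left hR1 _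
  -- Term 1 estimate (general)
  have hterm1 : (C₀ * (t (n-1))^(α-2)) * (τ n)^2 ≤ K * X := by
    have hb := hτub n (by omega)
    have h2 : (τ n)^2 ≤ (T * δ * ((n:ℝ)/N)^(δ-1) * (1/N))^2 :=
      pow_le_pow_left₀ hτnpos.le hb 2
    have hpw : (0:ℝ) ≤ (t (n-1))^(α-2) := Real.rpow_nonneg htn1.le _
    calc (C₀ * (t (n-1))^(α-2)) * (τ n)^2
        ≤ (C₀ * (t (n-1))^(α-2)) * (T * δ * ((n:ℝ)/N)^(δ-1) * (1/N))^2 :=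
          mul_le_mul_of_nonneg_left h2 (by positivity)
      _ = (C₀ * T^(α-2) * T^(2:ℕ) * δ^2) *
            ((((n-1:ℕ):ℝ)/N)^(δ*(α-2)) * (((n:ℕ):ℝ)/N)^(δ-1) *
              (((n:ℝ)/N)^(δ-1) * (1/N * (1/N)))) := by
          rw [htpow (n-1) h1n1]; ring
      _ ≤ (C₀ * T^(α-2) * T^(2:ℕ) * δ^2) * (9^δ * X) := by
          apply mul_le_mul_of_nonneg_left _ (by positivity)
          apply piece hδ hα0 hα1
          · rw [hn1cast]; linarith
          · rw [hn1cast]; linarith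
          · exact lt_of_lt_of_le one_pos hncast1
          · exact le_refl _
          · exact hncast1
          · exact hnNcast
      _ = (C₀ * (T^(α-2) * T^(2:ℕ)) * δ^2 * 9^δ) * X := by ring
      _ = (C₀ * T^α * δ^2 * 9^δ) * X := by rw [hTcol]
      _ ≤ K * X := by
          apply mul_le_mul_of_nonneg_right _ hX0
          rw [hKdef]
          have : C₀ * T^α * δ^2 * 9^δ ≤ c' * T^α * δ^2 * 9^δ := by
            apply mul_le_mul_of_nonneg_right _ h9δ.le
            apply mul_le_mul_of_nonneg_right _ (by positivity)
            exact mul_le_mul_of_nonneg_right hC₀c' hTα.le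
          exact this
  -- Term 2 estimate: split n = 2 vs n ≥ 3
  have hterm2 : (τ n / τ (n-1)) * |u (t (n-2)) - u (t (n-1)) + τ (n-1) * u' (t (n-1))|
      ≤ K * X := by
    obtain rfl | hn3 : n = 2 ∨ 3 ≤ n := by omega
    · -- n = 2 case
      have ht1 : t 1 = T * ((1:ℝ)/N)^δ := by rw [ht 1]; norm_num
      have hτ1 : τ 1 = t 1 := by rw [hτ 1 (by omega)]; simp [ht0]
      have hR2 : |u (t 0) - u (t 1) + τ 1 * u' (t 1)| ≤ c' * (t 1)^α := by
        rw [ht0, hτ1]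
        exact near_zero (htpos 1 (by omega)) (htleT 1 (by omega)) ⟨hα0, hα1⟩ hC₀
          hcont hu hu' hbd
      have hratio : τ 2 / τ 1 ≤ δ * 2^(δ-1) := by
        rw [div_le_iff₀ hτn1pos]
        have hb2 := hτub 2 (by omega)
        have hsplit : (1:ℝ)/N > 0 := by positivity
        have e1 : ((1:ℝ)/N)^δ = ((1:ℝ)/N)^(δ-1) * ((1:ℝ)/N) := by
          rw [← Real.rpow_add_one (ne_of_gt hsplit)]
          norm_num
        have e2 : (((2:ℕ):ℝ)/N)^(δ-1) = 2^(δ-1) * ((1:ℝ)/N)^(δ-1) := by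
          rw [show ((2:ℕ):ℝ)/N = 2 * ((1:ℝ)/N) by push_cast; ring,
            Real.mul_rpow (by norm_num) hsplit.le]
        calc τ 2 ≤ T * δ * (((2:ℕ):ℝ)/N)^(δ-1) * (1/N) := hb2
        _ = δ * 2^(δ-1) * (T * (((1:ℝ)/N)^(δ-1) * ((1:ℝ)/N))) := by rw [e2]; ring
        _ = δ * 2^(δ-1) * τ 1 := by rw [hτ1, ht1, e1]
      have ht1α : (t 1)^α = T^α * (N:ℝ)^(-(δ*α)) := by
        rw [ht1, Real.mul_rpow hT.le (Real.rpow_nonneg (by positivity) δ),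
          ← Real.rpow_mul (by positivity : (0:ℝ) ≤ (1:ℝ)/N)]
        congr 1
        rw [one_div, ← Real.rpow_neg_one (N:ℝ), ← Real.rpow_mul hN0.le]
        congr 1
        ring
      have hXle : (N:ℝ)^(-(δ*α)) ≤ X := by
        rw [hXdef]
        exact Real.rpow_le_rpow_of_exponent_le hN1 (neg_le_neg (min_le_left _ _))
      have hδ2 : δ * 2^(δ-1) ≤ δ^2 * 9^δ := by
        have d1 : (2:ℝ)^(δ-1) ≤ (2:ℝ)^δ :=
          Real.rpow_le_rpow_of_exponent_le (by norm_num) (by linarith)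
        have d2 : (2:ℝ)^δ ≤ (9:ℝ)^δ := Real.rpow_le_rpow (by norm_num) (by norm_num) hδ0.le
        have d3 : δ ≤ δ^2 := by nlinarith
        have h2pos : (0:ℝ) ≤ (2:ℝ)^(δ-1) := Real.rpow_nonneg (by norm_num) _
        calc δ * 2^(δ-1) ≤ δ^2 * 2^(δ-1) := mul_le_mul_of_nonneg_right d3 h2pos
        _ ≤ δ^2 * 9^δ := mul_le_mul_of_nonneg_left (le_trans d1 d2) (by positivity)
      calc (τ 2 / τ (2-1)) * |u (t (2-2)) - u (t (2-1)) + τ (2-1) * u' (t (2-1))|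
          ≤ (δ * 2^(δ-1)) * (c' * (t 1)^α) := by
            apply mul_le_mul hratio hR2 (abs_nonneg _)
            positivity
        _ = (δ * 2^(δ-1)) * c' * (T^α * (N:ℝ)^(-(δ*α))) := by rw [ht1α]; ring
        _ ≤ (δ^2 * 9^δ) * c' * (T^α * X) := by
            apply mul_le_mul
            · exact mul_le_mul_of_nonneg_right hδ2 hc'0.le
            · exact mul_le_mul_of_nonneg_left hXle hTα.le
            · positivity
            · positivity
        _ = K * X := by rw [hKdef]; ring
    · -- n ≥ 3 case
      have h1n2 : 1 ≤ n - 2 := by omega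
      have htn2 : 0 < t (n-2) := htpos _ h1n2
      have htn21 : t (n-2) < t (n-1) := htmono _ _ (by omega)
      have hn2cast : ((n-2:ℕ):ℝ) = (n:ℝ) - 2 := by
        rw [Nat.cast_sub (by omega)]; norm_num
      have hM2 : ∀ s ∈ Set.Icc (t (n-2)) (t (n-1)), |u'' s| ≤ C₀ * (t (n-2))^(α-2) := by
        intro s hs
        have hs' : s ∈ Set.Ioc (0:ℝ) T := ⟨lt_of_lt_of_le htn2 hs.1, le_trans hs.2 htn1T⟩
        refine le_trans (hbd s hs') ?_
        exact mul_le_mul_of_nonneg_left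
          (Real.rpow_le_rpow_of_nonpos htn2 hs.1 (by linarith)) hC₀.le
      have hR2 : |u (t (n-2)) - u (t (n-1)) + τ (n-1) * u' (t (n-1))| ≤
          (C₀ * (t (n-2))^(α-2)) * (τ (n-1))^2 := by
        have := (mvt_pair htn2 htn21.le htn1T hu hu' hM2).2
        rw [hτn1]
        exact this
      have hbn := hτub n (by omega)
      have hbn1 := hτub (n-1) h1n1
      have hn1n1 : ((n-1-1:ℕ)) = n - 2 := by omega
      calc (τ n / τ (n-1)) * |u (t (n-2)) - u (t (n-1)) + τ (n-1) * u' (t (n-1))|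
          ≤ (τ n / τ (n-1)) * ((C₀ * (t (n-2))^(α-2)) * (τ (n-1))^2) := by
            apply mul_le_mul_of_nonneg_left hR2 (div_pos hτnpos hτn1pos).le
        _ = (C₀ * (t (n-2))^(α-2)) * (τ n * τ (n-1)) := by
            field_simp
        _ ≤ (C₀ * (t (n-2))^(α-2)) *
              ((T * δ * ((n:ℝ)/N)^(δ-1) * (1/N)) * (T * δ * (((n-1:ℕ):ℝ)/N)^(δ-1) * (1/N))) := by
            apply mul_le_mul_of_nonneg_left _ (by positivity)
            exact mul_le_mul hbn hbn1 hτn1pos.le (by positivity)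
        _ = (C₀ * T^(α-2) * T^(2:ℕ) * δ^2) *
              ((((n-2:ℕ):ℝ)/N)^(δ*(α-2)) * (((n-1:ℕ):ℝ)/N)^(δ-1) *
                (((n:ℝ)/N)^(δ-1) * (1/N * (1/N)))) := by
            rw [htpow (n-2) h1n2]; ring
        _ ≤ (C₀ * T^(α-2) * T^(2:ℕ) * δ^2) * (9^δ * X) := by
            apply mul_le_mul_of_nonneg_left _ (by positivity)
            apply piece hδ hα0 hα1
            · rw [hn2cast]
              have : (3:ℝ) ≤ (n:ℝ) := by exact_mod_cast hn3
              linarith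
            · rw [hn2cast]
              have : (3:ℝ) ≤ (n:ℝ) := by exact_mod_cast hn3
              linarith
            · rw [hn1cast]; linarith
            · rw [hn1cast]; linarith
            · exact hncast1
            · exact hnNcast
        _ = (C₀ * (T^(α-2) * T^(2:ℕ)) * δ^2 * 9^δ) * X := by ring
        _ = (C₀ * T^α * δ^2 * 9^δ) * X := by rw [hTcol]
        _ ≤ K * X := by
            apply mul_le_mul_of_nonneg_right _ hX0
            rw [hKdef]
            apply mul_le_mul_of_nonneg_right _ h9δ.le
            apply mul_le_mul_of_nonneg_right _ (by positivity)
            exact mul_le_mul_of_nonneg_right hC₀c' hTα.le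
  calc |u (t n) - ((1 + τ n / τ (n-1)) * u (t (n-1)) - (τ n / τ (n-1)) * u (t (n-2)))|
      ≤ (C₀ * (t (n-1))^(α-2)) * (τ n)^2
        + (τ n / τ (n-1)) * |u (t (n-2)) - u (t (n-1)) + τ (n-1) * u' (t (n-1))| := habs
    _ ≤ K * X + K * X := add_le_add hterm1 hterm2
    _ = 2 * K * X := by ring
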